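/- arXiv:1807.11596 — 4 statements merged into one kernel-verified Lean document; each statement's English description precedes it below -/
import Mathlib

section
/- Let K be a number field, U ⊆ 𝒪_K^× a subgroup, and let J(U) be the ideal of 𝒪_K generated by {u - 1 : u ∈ U}. In the semidirect product π := 𝒪_K ⋊ U (with U acting on the additive group of 𝒪_K by multiplication), the commutator subgroup [π, π] equals the set of pairs (a, 1) with a ∈ J(U). -/
open NumberField SemidirectProduct
open scoped commutatorElement

/-- The action of a subgroup `U ⊆ 𝒪_K^×` on the additive group of `𝒪_K` by multiplication,
written multiplicatively so as to form the semidirect product `𝒪_K ⋊ U`. -/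
def otAction (K : Type*) [Field K] [NumberField K] (U : Subgroup (𝓞 K)ˣ) :
    U →* MulAut (Multiplicative (𝓞 K)) where
  toFun u := AddEquiv.toMultiplicative (AddAut.mulLeft (u : (𝓞 K)ˣ))
  map_one' := by ext x; simp [AddEquiv.toMultiplicative]; rfl
  map_mul' a b := by ext x; simp [AddEquiv.toMultiplicative, mul_assoc]; rfl

section Helpers

variable {K : Type*} [Field K] [NumberField K] {U : Subgroup (𝓞 K)ˣ}

local notation "π" => Multiplicative (𝓞 K) ⋊[otAction K U] U

lemma otAction_apply (u : U) (x : Multiplicative (𝓞 K)) :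
    (otAction K U u) x = Multiplicative.ofAdd (((u : (𝓞 K)ˣ) : 𝓞 K) * Multiplicative.toAdd x) :=
  rfl

lemma ot_pair_mul (a b : 𝓞 K) :
    (⟨Multiplicative.ofAdd a, 1⟩ : π) * ⟨Multiplicative.ofAdd b, 1⟩ =
      ⟨Multiplicative.ofAdd (a + b), 1⟩ := by
  ext <;> simp [otAction_apply]

lemma ot_pair_inv (a : 𝓞 K) :
    (⟨Multiplicative.ofAdd a, 1⟩ : π)⁻¹ = ⟨Multiplicative.ofAdd (-a), 1⟩ := by
  ext <;> simp [otAction_apply]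

lemma ot_comm_spec (g h : π) :
    ⁅g, h⁆ = ⟨Multiplicative.ofAdd
        ((((g.right : (𝓞 K)ˣ) : 𝓞 K) - 1) * Multiplicative.toAdd h.left -
         (((h.right : (𝓞 K)ˣ) : 𝓞 K) - 1) * Multiplicative.toAdd g.left), 1⟩ := by
  obtain ⟨a, u⟩ := g
  obtain ⟨b, v⟩ := h
  have hr : (u * v * u⁻¹ * v⁻¹ : U) = 1 := by rw [mul_comm u v]; group
  ext
  · apply Multiplicative.toAdd.injective
    simp only [commutatorElement_def, mul_left, inv_left, mul_right, inv_right, otAction_apply,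
      toAdd_mul, toAdd_ofAdd, toAdd_inv]
    have h1 : ((((u⁻¹ : U) : (𝓞 K)ˣ) : 𝓞 K)) * (((u : (𝓞 K)ˣ)) : 𝓞 K) = 1 := by
      rw [← Units.val_mul]; norm_num
    have h2 : ((((v⁻¹ : U) : (𝓞 K)ˣ) : 𝓞 K)) * (((v : (𝓞 K)ˣ)) : 𝓞 K) = 1 := by
      rw [← Units.val_mul]; norm_num
    refine congrArg _ (congrArg Subtype.val (?_ : (_ : 𝓞 K) = _))
    push_cast [Units.val_inv_eq_inv_val] at h1 h2 ⊢
    set A := Multiplicative.toAdd a; set B := Multiplicative.toAdd b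
    linear_combination (-(((v : (𝓞 K)ˣ) : 𝓞 K) * A) - B) * h1 -
      ((u : (𝓞 K)ˣ) : 𝓞 K) * ((((u : (𝓞 K)ˣ)⁻¹ : (𝓞 K)ˣ)) : 𝓞 K) * B * h2
  · simp only [commutatorElement_def, mul_right, inv_right, hr]

end Helpers

/-- The commutator subgroup of `π = 𝒪_K ⋊ U` is precisely the set of pairs `(a, 1)`
with `a` in the ideal `J(U)` generated by `u - 1` for `u ∈ U`. -/
theorem commutator_of_OT_pi (K : Type*) [Field K] [NumberField K] (U : Subgroup (𝓞 K)ˣ) :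
    let J : Ideal (𝓞 K) := Ideal.span {x : 𝓞 K | ∃ u : U, x = ((u : (𝓞 K)ˣ) : 𝓞 K) - 1}
    (commutator (Multiplicative (𝓞 K) ⋊[otAction K U] U) : Set _) =
      {p : Multiplicative (𝓞 K) ⋊[otAction K U] U |
        p.right = 1 ∧ Multiplicative.toAdd p.left ∈ J} := by
  intro J
  have hJgen : ∀ u : U, ((u : (𝓞 K)ˣ) : 𝓞 K) - 1 ∈ J :=
    fun u => Ideal.subset_span ⟨u, rfl⟩
  ext p
  simp only [SetLike.mem_coe, Set.mem_setOf_eq]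
  constructor
  · intro hp
    let H : Subgroup (Multiplicative (𝓞 K) ⋊[otAction K U] U) :=
      { carrier := {p | p.right = 1 ∧ Multiplicative.toAdd p.left ∈ J}
        one_mem' := by simp
        mul_mem' := by
          rintro x y ⟨hx1, hx2⟩ ⟨hy1, hy2⟩
          refine ⟨by simp [hx1, hy1], ?_⟩
          simp only [mul_left, hx1, map_one, MulAut.one_apply, toAdd_mul]
          exact J.add_mem hx2 hy2
        inv_mem' := by
          rintro x ⟨hx1, hx2⟩
          refine ⟨by simp [hx1], ?_⟩
          simp only [inv_left, hx1, inv_one, map_one, MulAut.one_apply, toAdd_inv]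
          exact J.neg_mem hx2 }
    have hle : commutator (Multiplicative (𝓞 K) ⋊[otAction K U] U) ≤ H := by
      rw [commutator_def, Subgroup.commutator_le]
      intro g _ h _
      rw [ot_comm_spec]
      refine ⟨rfl, ?_⟩
      simp only [toAdd_ofAdd]
      exact J.sub_mem (J.mul_mem_right _ (hJgen g.right)) (J.mul_mem_right _ (hJgen h.right))
    exact hle hp
  · rintro ⟨hp1, hp2⟩
    have key : ∀ a ∈ J, (⟨Multiplicative.ofAdd a, 1⟩ :
        Multiplicative (𝓞 K) ⋊[otAction K U] U) ∈
        commutator (Multiplicative (𝓞 K) ⋊[otAction K U] U) := by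
      have step1 : ∀ a ∈ J, a ∈ AddSubgroup.closure
          {x : 𝓞 K | ∃ (u : U) (r : 𝓞 K), x = (((u : (𝓞 K)ˣ) : 𝓞 K) - 1) * r} := by
        intro a ha
        refine Submodule.span_induction ?_ ?_ ?_ ?_ ha
        · rintro x ⟨u, rfl⟩
          exact AddSubgroup.subset_closure ⟨u, 1, (mul_one _).symm⟩
        · exact zero_mem _
        · intro x y _ _ hx hy; exact add_mem hx hy
        · intro r x _ hx
          refine AddSubgroup.closure_induction ?_ ?_ ?_ ?_ hx
          · rintro y ⟨u, s, rfl⟩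
            refine AddSubgroup.subset_closure ⟨u, r * s, ?_⟩
            show r • ((((u : (𝓞 K)ˣ) : 𝓞 K) - 1) * s) = _
            simp only [smul_eq_mul]; ring
          · rw [smul_zero]; exact zero_mem _
          · intro y z _ _ hy hz
            rw [smul_add]; exact add_mem hy hz
          · intro y _ hy
            rw [smul_neg]; exact neg_mem hy
      intro a ha
      refine AddSubgroup.closure_induction ?_ ?_ ?_ ?_ (step1 a ha)
      · rintro x ⟨u, r, rfl⟩
        have := ot_comm_spec (⟨1, u⟩ : Multiplicative (𝓞 K) ⋊[otAction K U] U)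
          ⟨Multiplicative.ofAdd r, 1⟩
        simp only [toAdd_ofAdd] at this
        have h2 : (⟨Multiplicative.ofAdd ((((u : (𝓞 K)ˣ) : 𝓞 K) - 1) * r), 1⟩ :
            Multiplicative (𝓞 K) ⋊[otAction K U] U) =
            ⁅(⟨1, u⟩ : Multiplicative (𝓞 K) ⋊[otAction K U] U), ⟨Multiplicative.ofAdd r, 1⟩⁆ := by
          rw [this]
          congr 1
          simp
        rw [h2, commutator_def]
        exact Subgroup.commutator_mem_commutator (Subgroup.mem_top _) (Subgroup.mem_top _)
      · simpa using (commutator _).one_mem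
      · intro x y _ _ hx hy
        rw [← ot_pair_mul]
        exact mul_mem hx hy
      · intro x _ hx
        rw [← ot_pair_inv]
        exact inv_mem hx
    have hpe : p = ⟨Multiplicative.ofAdd (Multiplicative.toAdd p.left), 1⟩ := by
      ext <;> simp [hp1]
    rw [hpe]
    exact key _ hp2
end

section
/- Let K be a number field and U ⊆ 𝒪_K^× a subgroup containing at least one element u ≠ 1. Suppose β : U → 𝒪_K and δ = id satisfy β(b₁b₂) = β(b₁) + b₁·β(b₂) for all b₁, b₂ ∈ U. Then there exists c₀ ∈ K with (u−1)·c₀ ∈ 𝒪_K for all u ∈ U, such that β(b) = c₀·(b−1) for all b ∈ U. -/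
open NumberField

/-- A crossed homomorphism `β : U → 𝒪_K` for the trivial twisting (`δ = id`), on a subgroup
`U ⊆ 𝒪_K^×` containing some `u ≠ 1`, is of the form `β(b) = c₀·(b − 1)` for some `c₀ ∈ K`
lying in the fractional ideal `(𝒪_K : J(U))`, i.e. with `(u−1)·c₀ ∈ 𝒪_K` for all `u ∈ U`. -/
theorem crossed_hom_eq_principal (K : Type*) [Field K] [NumberField K]
    (U : Subgroup (𝓞 K)ˣ) (hU : ∃ u : U, u ≠ 1)
    (β : U → 𝓞 K)
    (hβ : ∀ b₁ b₂ : U, β (b₁ * b₂) = β b₁ + ((b₁ : (𝓞 K)ˣ) : 𝓞 K) * β b₂) :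
    ∃ c₀ : K,
      (∀ u : U, (algebraMap (𝓞 K) K ((u : (𝓞 K)ˣ) : 𝓞 K) - 1) * c₀ ∈
        Set.range (algebraMap (𝓞 K) K)) ∧
      ∀ b : U, algebraMap (𝓞 K) K (β b) =
        c₀ * (algebraMap (𝓞 K) K ((b : (𝓞 K)ˣ) : 𝓞 K) - 1) := by
  obtain ⟨u₀, hu₀⟩ := hU
  set f := algebraMap (𝓞 K) K with hf
  have hinj : Function.Injective f := FaithfulSMul.algebraMap_injective _ _
  have hne : f ((u₀ : (𝓞 K)ˣ) : 𝓞 K) - 1 ≠ 0 := by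
    intro h
    apply hu₀
    have : f ((u₀ : (𝓞 K)ˣ) : 𝓞 K) = f 1 := by rw [map_one]; linear_combination h
    have h2 : ((u₀ : (𝓞 K)ˣ) : 𝓞 K) = 1 := hinj this
    have h3 : (u₀ : (𝓞 K)ˣ) = 1 := Units.ext h2
    exact Subtype.ext h3
  -- key identity: β b * (u₀ - 1) = β u₀ * (b - 1)
  have key : ∀ b : U, β b * (((u₀ : (𝓞 K)ˣ) : 𝓞 K) - 1)
      = β u₀ * ((((b : (𝓞 K)ˣ) : 𝓞 K)) - 1) := by
    intro b
    have h1 := hβ u₀ b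
    have h2 := hβ b u₀
    rw [mul_comm] at h2
    have := h1.symm.trans h2
    ring_nf
    ring_nf at this
    linear_combination this
  refine ⟨f (β u₀) / (f ((u₀ : (𝓞 K)ˣ) : 𝓞 K) - 1), ?_, ?_⟩
  · intro u
    refine ⟨β u, ?_⟩
    have := key u
    have hK : f (β u) * (f ((u₀ : (𝓞 K)ˣ) : 𝓞 K) - 1)
        = f (β u₀) * (f ((u : (𝓞 K)ˣ) : 𝓞 K) - 1) := by
      have := congrArg f this
      push_cast at this ⊢
      simpa [map_mul, map_sub, map_one] using this
    field_simp
    linear_combination hK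
  · intro b
    have := key b
    have hK : f (β b) * (f ((u₀ : (𝓞 K)ˣ) : 𝓞 K) - 1)
        = f (β u₀) * (f ((b : (𝓞 K)ˣ) : 𝓞 K) - 1) := by
      have := congrArg f this
      simpa [map_mul, map_sub, map_one] using this
    field_simp
    linear_combination hK
end

section
/- Let K be a number field, U ⊆ 𝒪_K^× a subgroup such that no proper subfield of K contains U. Let α be an automorphism of the additive group (𝒪_K, +) and δ ∈ Aut(U) such that α(ab) = α(a)·δ(b) for all a ∈ 𝒪_K, b ∈ U. Then δ extends to a field automorphism φ : K → K with φ(U) = U, i.e., δ is the restriction to U of an element of Aut(K/ℚ) preserving U. -/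
open NumberField

/-- Suppose no proper subfield of `K` contains the subgroup `U ⊆ 𝒪_K^×` (simple type).
If `α` is an automorphism of the additive group `(𝒪_K, +)` and `δ ∈ Aut(U)` satisfy
`α(a·b) = α(a)·δ(b)` for all `a ∈ 𝒪_K`, `b ∈ U`, then `δ` is the restriction to `U` of a
field automorphism `φ : K → K` (which consequently preserves `U`). -/
theorem delta_extends_to_field_aut (K : Type*) [Field K] [NumberField K]
    (U : Subgroup (𝓞 K)ˣ)
    (hsimple : ∀ L : Subfield K,
      (∀ u : U, algebraMap (𝓞 K) K ((u : (𝓞 K)ˣ) : 𝓞 K) ∈ L) → L = ⊤)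
    (α : (𝓞 K) ≃+ (𝓞 K)) (δ : U ≃* U)
    (h : ∀ (a : 𝓞 K) (b : U), α (a * ((b : (𝓞 K)ˣ) : 𝓞 K)) =
      α a * (((δ b : U) : (𝓞 K)ˣ) : 𝓞 K)) :
    ∃ φ : K ≃+* K, ∀ u : U,
      φ (algebraMap (𝓞 K) K ((u : (𝓞 K)ˣ) : 𝓞 K)) =
        algebraMap (𝓞 K) K (((δ u : U) : (𝓞 K)ˣ) : 𝓞 K) := by
  classical
  set ι : 𝓞 K →+* K := algebraMap (𝓞 K) K with hιdef
  have hιinj : Function.Injective ι := RingOfIntegers.coe_injective (K := K)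
  set b := RingOfIntegers.basis K with hbdef
  set b' : Module.Basis _ ℚ K :=
    ((b.map α.toIntLinearEquiv).localizationLocalization ℚ (nonZeroDivisors ℤ) K) with hb'def
  set ψ : K ≃ₗ[ℚ] K := (integralBasis K).equiv b' (Equiv.refl _) with hψdef
  have hψb : ∀ i, ψ (integralBasis K i) = ι (α (b i)) := by
    intro i
    rw [hψdef, Module.Basis.equiv_apply, hb'def, Module.Basis.localizationLocalization_apply,
      Module.Basis.map_apply]
    rfl
  have hψ : ∀ a : 𝓞 K, ψ (ι a) = ι (α a) := by
    have heq : (ψ.toLinearMap.restrictScalars ℤ).comp ι.toAddMonoidHom.toIntLinearMap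
        = ι.toAddMonoidHom.toIntLinearMap.comp α.toAddMonoidHom.toIntLinearMap := by
      apply b.ext
      intro i
      simpa using hψb i
    intro a
    simpa using LinearMap.congr_fun heq a
  -- notation for coercion of units
  have hval : ∀ u : U, ((u : (𝓞 K)ˣ) : 𝓞 K) = ((u : (𝓞 K)ˣ) : 𝓞 K) := fun _ => rfl
  -- α at units: α u = α 1 * δ u
  have hαu : ∀ u : U, α ((u : (𝓞 K)ˣ) : 𝓞 K) = α 1 * (((δ u : U) : (𝓞 K)ˣ) : 𝓞 K) := by
    intro u
    simpa using h 1 u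
  set c : K := ι (α 1) with hcdef
  have hα1 : (α 1 : 𝓞 K) ≠ 0 := by
    intro h0
    exact one_ne_zero (α.injective (by simp [h0]))
  have hc : c ≠ 0 := by
    simpa [hcdef, map_eq_zero_iff ι hιinj] using hα1
  -- key twisted multiplicativity of ψ
  have hψmul : ∀ (u : U) (x : K),
      ψ (x * ι ((u : (𝓞 K)ˣ) : 𝓞 K)) = ψ x * ι (((δ u : U) : (𝓞 K)ˣ) : 𝓞 K) := by
    intro u
    have heq : ψ.toLinearMap.comp (LinearMap.mulRight ℚ (ι ((u : (𝓞 K)ˣ) : 𝓞 K)))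
        = (LinearMap.mulRight ℚ (ι (((δ u : U) : (𝓞 K)ˣ) : 𝓞 K))).comp ψ.toLinearMap := by
      apply (integralBasis K).ext
      intro i
      simp only [LinearMap.coe_comp, Function.comp_apply, LinearMap.mulRight_apply,
        LinearEquiv.coe_coe, integralBasis_apply]
      rw [show (algebraMap (𝓞 K) K) (b i) = ι (b i) from rfl, ← map_mul, hψ, hψ, h (b i) u,
        map_mul]
    intro x
    simpa using LinearMap.congr_fun heq x
  set f : K → K := fun x => c⁻¹ * ψ x with hfdef
  have hf1 : f 1 = 1 := by
    have h1 : ψ (1 : K) = c := by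
      have := hψ 1
      rwa [map_one ι] at this
    simp [hfdef, h1, inv_mul_cancel₀ hc]
  have hfu : ∀ u : U, f (ι ((u : (𝓞 K)ˣ) : 𝓞 K)) = ι (((δ u : U) : (𝓞 K)ˣ) : 𝓞 K) := by
    intro u
    have : ψ (ι ((u : (𝓞 K)ˣ) : 𝓞 K)) = c * ι (((δ u : U) : (𝓞 K)ˣ) : 𝓞 K) := by
      rw [hψ, hαu u, map_mul]
    simp [hfdef, this, ← mul_assoc, inv_mul_cancel₀ hc]
  have hfxu : ∀ (x : K) (u : U),
      f (x * ι ((u : (𝓞 K)ˣ) : 𝓞 K)) = f x * ι (((δ u : U) : (𝓞 K)ˣ) : 𝓞 K) := by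
    intro x u
    simp [hfdef, hψmul u x, mul_assoc]
  have hfadd : ∀ x y : K, f (x + y) = f x + f y := by
    intro x y; simp [hfdef, map_add, mul_add]
  have hf0 : f 0 = 0 := by simp [hfdef]
  have hfneg : ∀ x : K, f (-x) = - f x := by intro x; simp [hfdef]
  have hfinj : Function.Injective f := by
    intro x y hxy
    exact ψ.injective (mul_left_cancel₀ (inv_ne_zero hc) hxy)
  have hfsurj : Function.Surjective f := by
    intro z
    exact ⟨ψ.symm (c * z), by simp [hfdef, ← mul_assoc, inv_mul_cancel₀ hc]⟩
  set Lf : Subfield K :=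
    { carrier := {x : K | ∀ y : K, f (x * y) = f x * f y}
      one_mem' := by intro y; simp [hf1]
      mul_mem' := by
        intro x x' hx hx' y
        have hxx' : f (x * x') = f x * f x' := by simpa [hf1] using hx x'
        calc f (x * x' * y) = f (x * (x' * y)) := by ring_nf
          _ = f x * (f x' * f y) := by rw [hx (x' * y), hx' y]
          _ = f (x * x') * f y := by rw [hxx']; ring
      add_mem' := by
        intro x x' hx hx' y
        rw [add_mul, hfadd, hx y, hx' y, hfadd, add_mul]
      zero_mem' := by intro y; simp [hf0]
      neg_mem' := by
        intro x hx y
        rw [neg_mul, hfneg, hx y, hfneg, neg_mul]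
      inv_mem' := by
        intro x hx
        by_cases hx0 : x = 0
        · intro y; simp [hx0, hf0]
        have hfx0 : f x ≠ 0 := fun h0 => hx0 (hfinj (h0.trans hf0.symm))
        have key : ∀ y : K, f (x⁻¹ * y) = (f x)⁻¹ * f y := by
          intro y
          have := hx (x⁻¹ * y)
          rw [mul_inv_cancel_left₀ hx0] at this
          rw [this, ← mul_assoc, inv_mul_cancel₀ hfx0, one_mul]
        intro y
        rw [key y, show f x⁻¹ = (f x)⁻¹ by simpa [hf1] using key 1]
       } with hLdef
  have hUL : ∀ u : U, ι ((u : (𝓞 K)ˣ) : 𝓞 K) ∈ Lf := by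
    intro u y
    rw [mul_comm, hfxu y u, ← hfu u, mul_comm]
  have hLtop : Lf = ⊤ := hsimple Lf hUL
  have hfmul : ∀ x y : K, f (x * y) = f x * f y := by
    intro x y
    have hx : x ∈ Lf := hLtop ▸ Subfield.mem_top x
    exact hx y
  set F : K →+* K :=
    { toFun := f
      map_one' := hf1
      map_mul' := hfmul
      map_zero' := hf0
      map_add' := hfadd } with hFdef
  refine ⟨RingEquiv.ofBijective F ⟨hfinj, hfsurj⟩, fun u => ?_⟩
  exact hfu u
end

section
/- Let K be a number field and 𝔪 a modulus with 𝔪(P) = 1 at all real places, such that the ideal 𝔪₀ admits generators g₁,…,g_r with each gᵢ + 1 a totally positive unit of 𝒪_K (an 'exceptional modulus'). Then J(U_{𝔪,1}) = 𝔪₀, where U_{𝔪,1} is the ray unit group of 𝔪 and J(U_{𝔪,1}) is the ideal generated by {u−1 : u ∈ U_{𝔪,1}}. -/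
open NumberField

/-- Let `𝔪` be an exceptional modulus: `𝔪(σ) = 1` at all real places, and the finite part
`𝔪₀ = ∏_{P ∈ S} P^{e P}` admits a set of generators `g` such that each `g + 1` is a totally
positive unit.  Then `J(U_{𝔪,1}) = 𝔪₀`, where `U_{𝔪,1}` is the ray unit group of `𝔪`. -/
theorem J_of_ray_units_eq_m0_of_exceptional (K : Type*) [Field K] [NumberField K]
    (S : Finset (Ideal (𝓞 K))) (hS : ∀ P ∈ S, P.IsPrime ∧ P ≠ ⊥)
    (e : Ideal (𝓞 K) → ℕ) (he : ∀ P ∈ S, 1 ≤ e P)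
    (G : Set (𝓞 K)) (hGgen : Ideal.span G = ∏ P ∈ S, P ^ e P)
    (hGunit : ∀ g ∈ G, ∃ v : (𝓞 K)ˣ, (v : 𝓞 K) = g + 1 ∧
      ∀ σ : K →+* ℝ, 0 < σ (algebraMap (𝓞 K) K (v : 𝓞 K))) :
    Ideal.span {x : 𝓞 K | ∃ u : (𝓞 K)ˣ,
        (∀ P ∈ S, ((u : 𝓞 K) - 1) ∈ P ^ e P) ∧
        (∀ σ : K →+* ℝ, 0 < σ (algebraMap (𝓞 K) K (u : 𝓞 K))) ∧
        x = (u : 𝓞 K) - 1} =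
      ∏ P ∈ S, P ^ e P := by
  have hinf : (S.inf fun P => P ^ e P) = ∏ P ∈ S, P ^ e P :=
    IsDedekindDomain.inf_prime_pow_eq_prod S id e
      (fun P hP => Ideal.prime_of_isPrime (hS P hP).2 (hS P hP).1)
      (fun i _ j _ h => h)
  apply le_antisymm
  · rw [Ideal.span_le]
    rintro x ⟨u, hu, -, rfl⟩
    rw [← hinf]
    exact Submodule.mem_finsetInf.mpr hu
  · rw [← hGgen, Ideal.span_le]
    intro g hg
    obtain ⟨v, hv, hvpos⟩ := hGunit g hg
    refine Ideal.subset_span ⟨v, fun P hP => ?_, hvpos, by rw [hv]; ring⟩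
    have : (v : 𝓞 K) - 1 ∈ Ideal.span G := by
      rw [hv]; simpa using Ideal.subset_span hg
    rw [hGgen, ← hinf] at this
    exact Submodule.mem_finsetInf.mp this P hP
end
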